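/- Let G be a graph with a designated undeletable edge uv, and let G' be obtained by adding, for i = 1,...,N+2, vertices a_i, b_i with edges u a_i, u b_i, v b_i, a_i b_i (gadgets pairwise disjoint and mutually non-adjacent). If F is a set of at most N edges of G' such that G' - F contains no induced house, then uv ∉ F. -/

import Mathlib

/-- The house graph: a 4-cycle with a fifth vertex adjacent to two adjacent
cycle vertices (the complement of `P5`). -/
def house : SimpleGraph (Fin 5) :=
  SimpleGraph.fromEdgeSet {s(0,1), s(1,2), s(2,3), s(3,0), s(0,4), s(1,4)}

/-- The graph `G'` obtained from `G` by adding, for each `i < M`, gadget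
vertices `aᵢ = (i, false)` and `bᵢ = (i, true)` with edges
`u aᵢ, u bᵢ, v bᵢ, aᵢ bᵢ`; the gadgets are pairwise disjoint and mutually
non-adjacent. -/
def addHouseGadgets {V : Type*} (G : SimpleGraph V) (u v : V) (M : ℕ) :
    SimpleGraph (V ⊕ (Fin M × Bool)) :=
  SimpleGraph.fromRel (fun x y =>
    match x, y with
    | Sum.inl a, Sum.inl b => G.Adj a b
    | Sum.inl a, Sum.inr (_, false) => a = u
    | Sum.inl a, Sum.inr (_, true) => a = u ∨ a = v
    | Sum.inr (i, false), Sum.inr (j, true) => i = j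
    | _, _ => False)

lemma gadget_adj_idx {V : Type*} {G : SimpleGraph V} {u v : V} {M : ℕ}
    {i j : Fin M} {bi bj : Bool}
    (he : (addHouseGadgets G u v M).Adj (Sum.inr (i, bi)) (Sum.inr (j, bj))) : i = j := by
  cases bi <;> cases bj <;> simp [addHouseGadgets] at he <;> tauto

lemma gadget_idx_eq {V : Type*} {G : SimpleGraph V} {u v : V} {M : ℕ}
    {e : Sym2 (V ⊕ (Fin M × Bool))} (he : e ∈ (addHouseGadgets G u v M).edgeSet)
    {i j : Fin M} {bi bj : Bool}
    (hi : Sum.inr (i, bi) ∈ e) (hj : Sum.inr (j, bj) ∈ e) : i = j := by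
  induction e using Sym2.ind with
  | _ x y =>
    rw [SimpleGraph.mem_edgeSet] at he
    rw [Sym2.mem_iff] at hi hj
    rcases hi with hi | hi <;> rcases hj with hj | hj
    · rw [← hi] at hj; simp at hj; exact hj.1.symm
    · rw [← hi, ← hj] at he; exact gadget_adj_idx he
    · rw [← hi, ← hj] at he; exact gadget_adj_idx he.symm
    · rw [← hi] at hj; simp at hj; exact hj.1.symm

set_option maxHeartbeats 1600000 in
/-- Let `uv` be a designated undeletable edge of `G` and let `G'` be obtained by
attaching `N + 2` gadgets as above. If `F` is a set of at most `N` edges of `G'`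
such that `G' - F` contains no induced house, then `uv ∉ F`. -/
theorem undeletable_edge_not_deleted {V : Type*} (G : SimpleGraph V) (u v : V)
    (huv : G.Adj u v) (N : ℕ)
    (F : Set (Sym2 (V ⊕ (Fin (N + 2) × Bool))))
    (hFsub : F ⊆ (addHouseGadgets G u v (N + 2)).edgeSet)
    (hFfin : F.Finite) (hFcard : F.ncard ≤ N)
    (hfree : IsEmpty (house ↪g (addHouseGadgets G u v (N + 2)).deleteEdges F)) :
    s(Sum.inl u, Sum.inl v) ∉ F := by
  intro hmem
  classical
  -- the set of touched gadget indices
  set T : Finset (Fin (N + 2)) := Finset.univ.filter (fun i => ∃ e ∈ F,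
      Sum.inr (i, false) ∈ e ∨ Sum.inr (i, true) ∈ e) with hT
  have hchoice : ∀ i ∈ T, ∃ e ∈ F, Sum.inr (i, false) ∈ e ∨ Sum.inr (i, true) ∈ e := by
    intro i hi; simpa [hT] using hi
  have hTcard : T.card ≤ N := by
    have h1 : T.card ≤ hFfin.toFinset.card := by
      apply Finset.card_le_card_of_injOn
        (fun i => if h : i ∈ T then (hchoice i h).choose else s(Sum.inl u, Sum.inl u))
      · intro i hi
        dsimp only
        rw [dif_pos (show i ∈ T from hi)]
        exact hFfin.mem_toFinset.mpr (hchoice i hi).choose_spec.1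
      · intro i hi j hj hij
        simp only [Finset.mem_coe] at hi hj
        simp only [hi, hj, dif_pos] at hij
        obtain ⟨heF, hei⟩ := (hchoice i hi).choose_spec
        obtain ⟨hjF, hej⟩ := (hchoice j hj).choose_spec
        rw [hij] at hei
        rcases hei with hei | hei <;> rcases hej with hej | hej <;>
          exact gadget_idx_eq (hFsub hjF) hei hej
    have h2 : hFfin.toFinset.card = F.ncard := (Set.ncard_eq_toFinset_card F hFfin).symm
    omega
  have hc : 1 < Tᶜ.card := by
    have := Finset.card_compl T
    simp only [Fintype.card_fin] at this
    omega
  obtain ⟨i, hi, j, hj, hij⟩ := Finset.one_lt_card.mp hc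
  rw [Finset.mem_compl] at hi hj
  have hunt : ∀ k, k ∉ T → ∀ (x : V ⊕ (Fin (N + 2) × Bool)) (b : Bool),
      s(x, Sum.inr (k, b)) ∉ F := by
    intro k hk x b hmem'
    apply hk
    rw [hT, Finset.mem_filter]
    exact ⟨Finset.mem_univ _, ⟨_, hmem', by cases b <;> simp⟩⟩
  have hi1 : ∀ (x : V ⊕ (Fin (N + 2) × Bool)) (b : Bool), s(x, Sum.inr (i, b)) ∉ F :=
    hunt i hi
  have hi2 : ∀ (x : V ⊕ (Fin (N + 2) × Bool)) (b : Bool), s(Sum.inr (i, b), x) ∉ F := by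
    intro x b; rw [Sym2.eq_swap]; exact hi1 x b
  have hj1 : ∀ (x : V ⊕ (Fin (N + 2) × Bool)) (b : Bool), s(x, Sum.inr (j, b)) ∉ F :=
    hunt j hj
  have hj2 : ∀ (x : V ⊕ (Fin (N + 2) × Bool)) (b : Bool), s(Sum.inr (j, b), x) ∉ F := by
    intro x b; rw [Sym2.eq_swap]; exact hj1 x b
  have huvne : u ≠ v := huv.ne
  have hmem' : s(Sum.inl v, Sum.inl u) ∈ F := by rw [Sym2.eq_swap]; exact hmem
  clear hunt hi hj hTcard hc hchoice hT hFcard hFsub hFfin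
  clear T
  apply hfree.false
  refine ⟨⟨![Sum.inl u, Sum.inr (i, true), Sum.inl v, Sum.inr (j, true),
      Sum.inr (i, false)], ?_⟩, ?_⟩
  · intro a b
    fin_cases a <;> fin_cases b <;> simp [huvne, huvne.symm, hij, hij.symm]
  · intro a b
    fin_cases a <;> fin_cases b <;> dsimp only [DFunLike.coe] <;>
      simp [house, addHouseGadgets, SimpleGraph.deleteEdges_adj, hmem, hmem',
        hi1, hi2, hj1, hj2, huv, huvne, huvne.symm, hij, hij.symm]
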